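/- Let Ω ⊆ ℂ be a simply connected domain, h : Ω → ℂ holomorphic and not identically zero, and u : Ω → ℝ a C² solution of Δu = 4|h(z)|²e^{2u}. If f, g : Ω → 𝔻 are two holomorphic maps with u(z) = log(|f'(z)|/((1-|f(z)|²)|h(z)|)) = log(|g'(z)|/((1-|g(z)|²)|h(z)|)) on Ω (off the zeros of h), then g = T ∘ f for some conformal automorphism T of 𝔻. -/

import Mathlib

open Complex

/-- Euclidean Laplacian of a real-valued function on `ℂ`. -/
noncomputable def lap (u : ℂ → ℝ) (z : ℂ) : ℝ :=
  fderiv ℝ (fun w => fderiv ℝ u w 1) z 1 + fderiv ℝ (fun w => fderiv ℝ u w Complex.I) z Complex.I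

/-- `T` is a conformal automorphism of the unit disk. -/
def IsDiskAutomorphism (T : ℂ → ℂ) : Prop :=
  DifferentiableOn ℂ T (Metric.ball (0:ℂ) 1) ∧
  Set.MapsTo T (Metric.ball (0:ℂ) 1) (Metric.ball (0:ℂ) 1) ∧
  ∃ S : ℂ → ℂ, DifferentiableOn ℂ S (Metric.ball (0:ℂ) 1) ∧
    Set.MapsTo S (Metric.ball (0:ℂ) 1) (Metric.ball (0:ℂ) 1) ∧
    (∀ z ∈ Metric.ball (0:ℂ) 1, S (T z) = z) ∧
    (∀ z ∈ Metric.ball (0:ℂ) 1, T (S z) = z)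


open Complex Filter Topology


noncomputable def blas (a z : ℂ) : ℂ := (z - a) / (1 - (starRingEnd ℂ) a * z)

lemma key_id (a z : ℂ) :
    normSq (1 - (starRingEnd ℂ) a * z) - normSq (z - a) = (1 - normSq a) * (1 - normSq z) := by
  simp only [normSq_apply, Complex.sub_re, Complex.sub_im, Complex.one_re, Complex.one_im,
    Complex.mul_re, Complex.mul_im, Complex.conj_re, Complex.conj_im]
  ring

lemma denom_ne (a z : ℂ) (ha : ‖a‖ < 1) (hz : ‖z‖ < 1) :
    1 - (starRingEnd ℂ) a * z ≠ 0 := by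
  intro hEq
  have h1 : (1:ℂ) = (starRingEnd ℂ) a * z := by linear_combination hEq
  have : (1:ℝ) = ‖(starRingEnd ℂ) a * z‖ := by rw [← h1]; simp
  rw [norm_mul, Complex.norm_conj] at this
  nlinarith [norm_nonneg a, norm_nonneg z]

lemma normSq_denom_pos (a z : ℂ) (ha : ‖a‖ < 1) (hz : ‖z‖ < 1) :
    0 < normSq (1 - (starRingEnd ℂ) a * z) :=
  normSq_pos.mpr (denom_ne a z ha hz)

lemma one_sub_normSq_blas (a z : ℂ) (ha : ‖a‖ < 1) (hz : ‖z‖ < 1) :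
    1 - normSq (blas a z) =
      (1 - normSq a) * (1 - normSq z) / normSq (1 - (starRingEnd ℂ) a * z) := by
  have hdp := normSq_denom_pos a z ha hz
  rw [blas, normSq_div, eq_div_iff (ne_of_gt hdp), sub_mul, div_mul_cancel₀ _ (ne_of_gt hdp),
    one_mul, ← key_id a z]

lemma normSq_lt_one_iff (z : ℂ) : normSq z < 1 ↔ ‖z‖ < 1 := by
  rw [← Complex.sq_norm]
  constructor
  · intro hlt; nlinarith [norm_nonneg z]
  · intro hlt; nlinarith [norm_nonneg z]

lemma blas_mem_ball (a z : ℂ) (ha : ‖a‖ < 1) (hz : ‖z‖ < 1) :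
    ‖blas a z‖ < 1 := by
  rw [← normSq_lt_one_iff]
  have h1 := one_sub_normSq_blas a z ha hz
  have hdp := normSq_denom_pos a z ha hz
  have ha2 := (normSq_lt_one_iff a).mpr ha
  have hz2 := (normSq_lt_one_iff z).mpr hz
  have h2 : 0 < (1 - normSq a) * (1 - normSq z) / normSq (1 - (starRingEnd ℂ) a * z) := by
    have h3 : (0:ℝ) < 1 - normSq a := by linarith
    have h4 : (0:ℝ) < 1 - normSq z := by linarith
    positivity
  linarith

lemma blas_inv (a z : ℂ) (ha : ‖a‖ < 1) (hz : ‖z‖ < 1) :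
    blas (-a) (blas a z) = z := by
  have hd := denom_ne a z ha hz
  have hd2 : 1 - (starRingEnd ℂ) (-a) * (blas a z) ≠ 0 :=
    denom_ne (-a) (blas a z) (by simpa using ha) (blas_mem_ball a z ha hz)
  have ha2 := (normSq_lt_one_iff a).mpr ha
  have hd3 : (1:ℂ) - a * (starRingEnd ℂ) a ≠ 0 := by
    rw [Complex.mul_conj]
    intro hEq
    have : ((1 - normSq a : ℝ) : ℂ) = 0 := by push_cast; linear_combination hEq
    rw [Complex.ofReal_eq_zero] at this
    linarith
  simp only [blas] at hd2 ⊢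
  have hd' : 1 - z * (starRingEnd ℂ) a ≠ 0 := by rwa [mul_comm]
  rw [map_neg] at hd2 ⊢
  field_simp at hd2 ⊢
  field_simp [hd3]
  linear_combination z * mul_inv_cancel₀ hd3

lemma blas_hasDerivAt (a z : ℂ) (hd : 1 - (starRingEnd ℂ) a * z ≠ 0) :
    HasDerivAt (blas a) ((1 - a * (starRingEnd ℂ) a) / (1 - (starRingEnd ℂ) a * z)^2) z := by
  have h1 : HasDerivAt (fun w : ℂ => w - a) 1 z := (hasDerivAt_id z).sub_const a
  have h2 : HasDerivAt (fun w : ℂ => 1 - (starRingEnd ℂ) a * w) (-(starRingEnd ℂ) a) z := by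
    simpa using ((hasDerivAt_id z).const_mul ((starRingEnd ℂ) a)).const_sub 1
  have := h1.div h2 hd
  exact this.congr_deriv (by ring)

lemma blas_deriv_abs (a z : ℂ) (ha : ‖a‖ < 1) (hd : 1 - (starRingEnd ℂ) a * z ≠ 0) :
    ‖(1 - a * (starRingEnd ℂ) a) / (1 - (starRingEnd ℂ) a * z)^2‖
      = (1 - normSq a) / normSq (1 - (starRingEnd ℂ) a * z) := by
  have ha2 := (normSq_lt_one_iff a).mpr ha
  rw [norm_div, norm_pow, Complex.sq_norm]
  congr 1
  have : (1:ℂ) - a * (starRingEnd ℂ) a = ((1 - normSq a : ℝ) : ℂ) := by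
    rw [Complex.mul_conj]; push_cast; ring
  rw [this, Complex.norm_real, Real.norm_eq_abs, abs_of_pos (by linarith)]

/-- density invariance: |φ_a'(w)| (1-|w|²) = 1 - |φ_a w|². -/
lemma blas_density (a w : ℂ) (ha : ‖a‖ < 1) (hw : ‖w‖ < 1) :
    ‖(1 - a * (starRingEnd ℂ) a) / (1 - (starRingEnd ℂ) a * w)^2‖ * (1 - normSq w)
      = 1 - normSq (blas a w) := by
  rw [blas_deriv_abs a w ha (denom_ne a w ha hw), one_sub_normSq_blas a w ha hw]
  field_simp

lemma mem_ball_iff_abs (w : ℂ) : w ∈ Metric.ball (0:ℂ) 1 ↔ ‖w‖ < 1 := by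
  rw [Metric.mem_ball, Complex.dist_eq, sub_zero]

lemma blas_diffAt (a w : ℂ) (ha : ‖a‖ < 1) (hw : ‖w‖ < 1) :
    DifferentiableAt ℂ (blas a) w :=
  (blas_hasDerivAt a w (denom_ne a w ha hw)).differentiableAt

lemma rot_blas_diffOn (a b e : ℂ) (ha : ‖a‖ < 1) (hb : ‖b‖ < 1)
    (he : ‖e‖ = 1) :
    DifferentiableOn ℂ (fun w => blas b (e * blas a w)) (Metric.ball (0:ℂ) 1) := by
  intro w hw
  rw [mem_ball_iff_abs] at hw
  have h1 : DifferentiableAt ℂ (blas a) w := blas_diffAt a w ha hw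
  have h2 : ‖e * blas a w‖ < 1 := by
    rw [norm_mul, he, one_mul]; exact blas_mem_ball a w ha hw
  have h3 : DifferentiableAt ℂ (blas b) (e * blas a w) := blas_diffAt b _ hb h2
  exact (h3.comp w ((h1.const_mul e))).differentiableWithinAt

lemma rot_blas_mapsTo (a b e : ℂ) (ha : ‖a‖ < 1) (hb : ‖b‖ < 1)
    (he : ‖e‖ = 1) :
    Set.MapsTo (fun w => blas b (e * blas a w)) (Metric.ball (0:ℂ) 1) (Metric.ball (0:ℂ) 1) := by
  intro w hw
  rw [mem_ball_iff_abs] at hw ⊢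
  have h2 : ‖e * blas a w‖ < 1 := by
    rw [norm_mul, he, one_mul]; exact blas_mem_ball a w ha hw
  exact blas_mem_ball b _ hb h2

lemma rot_blas_inv (a b e : ℂ) (ha : ‖a‖ < 1) (hb : ‖b‖ < 1)
    (he : ‖e‖ = 1) (w : ℂ) (hw : ‖w‖ < 1) :
    blas (-a) ((starRingEnd ℂ) e * blas (-b) (blas b (e * blas a w))) = w := by
  have h2 : ‖e * blas a w‖ < 1 := by
    rw [norm_mul, he, one_mul]; exact blas_mem_ball a w ha hw
  rw [blas_inv b _ hb h2]
  have hee : (starRingEnd ℂ) e * (e * blas a w) = blas a w := by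
    rw [← mul_assoc, mul_comm ((starRingEnd ℂ) e) e, Complex.mul_conj]
    have : normSq e = 1 := by rw [← Complex.sq_norm, he]; norm_num
    rw [this]; simp
  rw [hee]
  exact blas_inv a w ha hw

lemma isDiskAuto (a b e : ℂ) (ha : ‖a‖ < 1) (hb : ‖b‖ < 1)
    (he : ‖e‖ = 1) :
    IsDiskAutomorphism (fun w => blas b (e * blas a w)) := by
  refine ⟨rot_blas_diffOn a b e ha hb he, rot_blas_mapsTo a b e ha hb he,
    (fun v => blas (-a) ((starRingEnd ℂ) e * blas (-b) v)), ?_, ?_, ?_, ?_⟩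
  · have := rot_blas_diffOn (-b) (-a) ((starRingEnd ℂ) e)
      (by simpa using hb) (by simpa using ha) (by simpa using he)
    simpa using this
  · have := rot_blas_mapsTo (-b) (-a) ((starRingEnd ℂ) e)
      (by simpa using hb) (by simpa using ha) (by simpa using he)
    simpa using this
  · intro z hz
    exact rot_blas_inv a b e ha hb he z ((mem_ball_iff_abs z).mp hz)
  · intro z hz
    have := rot_blas_inv (-b) (-a) ((starRingEnd ℂ) e)
      (by simpa using hb) (by simpa using ha) (by simpa using he) z ((mem_ball_iff_abs z).mp hz)
    simpa using this

lemma deriv_ne_zero_of_rep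
    (Ω : Set ℂ) (hΩ : IsOpen Ω)
    (h : ℂ → ℂ) (hh : DifferentiableOn ℂ h Ω)
    (u : ℂ → ℝ) (hu : ContDiffOn ℝ 2 u Ω)
    (hpde : ∀ z ∈ Ω, lap u z = 4 * (‖h z‖)^2 * Real.exp (2 * u z))
    (f : ℂ → ℂ) (hf : DifferentiableOn ℂ f Ω)
    (hfm : Set.MapsTo f Ω (Metric.ball (0:ℂ) 1))
    (hrepf : ∀ z ∈ Ω, h z ≠ 0 →
      u z = Real.log (‖deriv f z‖ /
        ((1 - (‖f z‖)^2) * ‖h z‖)))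
    (z₀ : ℂ) (hz₀ : z₀ ∈ Ω) (hh0 : h z₀ ≠ 0) : deriv f z₀ ≠ 0 := by
  intro hf0
  have hΩn : Ω ∈ 𝓝 z₀ := hΩ.mem_nhds hz₀
  have hfa : AnalyticOnNhd ℂ f Ω := hf.analyticOnNhd hΩ
  have hda : AnalyticAt ℂ (deriv f) z₀ := hfa.deriv z₀ hz₀
  have hhc : ContinuousAt h z₀ := (hh.differentiableAt hΩn).continuousAt
  have hhne : ∀ᶠ w in 𝓝 z₀, h w ≠ 0 := hhc.eventually_ne hh0
  have hΩev : ∀ᶠ w in 𝓝 z₀, w ∈ Ω := hΩn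
  rcases hda.eventually_eq_zero_or_eventually_ne_zero with hcase | hcase
  · -- deriv f ≡ 0 near z₀ : u ≡ 0 near z₀, contradict PDE
    have huev : ∀ᶠ w in 𝓝 z₀, u w = 0 := by
      filter_upwards [hcase, hhne, hΩev] with w h1 h2 h3
      rw [hrepf w h3 h2, h1]
      simp
    have h1 : ∀ᶠ w in 𝓝 z₀, fderiv ℝ u w = 0 := by
      have := huev.eventually_nhds
      filter_upwards [this] with w hw
      have : u =ᶠ[𝓝 w] (fun _ => (0:ℝ)) := hw
      rw [this.fderiv_eq, fderiv_fun_const]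
      rfl
    have h2 : (fun w => fderiv ℝ u w 1) =ᶠ[𝓝 z₀] (fun _ => (0:ℝ)) := by
      filter_upwards [h1] with w hw; rw [hw]; rfl
    have h3 : (fun w => fderiv ℝ u w Complex.I) =ᶠ[𝓝 z₀] (fun _ => (0:ℝ)) := by
      filter_upwards [h1] with w hw; rw [hw]; rfl
    have hlap : lap u z₀ = 0 := by
      rw [lap, h2.fderiv_eq, h3.fderiv_eq, fderiv_fun_const]
      simp
    have := hpde z₀ hz₀
    rw [hlap] at this
    have habs : 0 < ‖h z₀‖ := by
      simpa [norm_pos_iff] using hh0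
    have hpos := mul_pos (mul_pos (by norm_num : (0:ℝ) < 4) (pow_pos habs 2))
      (Real.exp_pos (2 * u z₀))
    linarith
  · -- deriv f ≠ 0 on punctured nbhd: u → -∞, contradict continuity
    set l := 𝓝[≠] z₀ with hl
    have hev : ∀ᶠ w in l, w ∈ Ω ∧ h w ≠ 0 ∧ deriv f w ≠ 0 := by
      have e1 : ∀ᶠ w in l, w ∈ Ω := hΩev.filter_mono nhdsWithin_le_nhds
      have e2 : ∀ᶠ w in l, h w ≠ 0 := hhne.filter_mono nhdsWithin_le_nhds
      filter_upwards [e1, e2, hcase] with w h1 h2 h3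
      exact ⟨h1, h2, h3⟩
    set φ : ℂ → ℝ := fun w => ‖deriv f w‖ /
        ((1 - (‖f w‖)^2) * ‖h w‖) with hφ
    have hfc : ContinuousAt f z₀ := (hf.differentiableAt hΩn).continuousAt
    have hnum : Tendsto (fun w => ‖deriv f w‖) l (𝓝 0) := by
      have : ContinuousAt (fun w => ‖deriv f w‖) z₀ :=
        continuous_norm.continuousAt.comp hda.continuousAt
      have h6 : Tendsto (fun w => ‖deriv f w‖) l (𝓝 (‖deriv f z₀‖)) :=
        this.tendsto.mono_left nhdsWithin_le_nhds
      rwa [hf0, norm_zero] at h6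
    have hden : Tendsto (fun w => (1 - (‖f w‖)^2) * ‖h w‖) l
        (𝓝 ((1 - (‖f z₀‖)^2) * ‖h z₀‖)) := by
      have : ContinuousAt (fun w => (1 - (‖f w‖)^2) * ‖h w‖) z₀ := by
        exact ((continuousAt_const.sub
          ((continuous_norm.continuousAt.comp hfc).pow 2)).mul
          (continuous_norm.continuousAt.comp hhc))
      exact this.tendsto.mono_left nhdsWithin_le_nhds
    have hdpos : 0 < (1 - (‖f z₀‖)^2) * ‖h z₀‖ := by
      have h1 : ‖f z₀‖ < 1 := (mem_ball_iff_abs _).mp (hfm hz₀)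
      have h2 : 0 < ‖h z₀‖ := by simpa [norm_pos_iff] using hh0
      have h3 : 0 < 1 - (‖f z₀‖)^2 := by nlinarith [norm_nonneg (f z₀)]
      exact mul_pos h3 h2
    have hφt : Tendsto φ l (𝓝 0) := by
      have := hnum.div hden (ne_of_gt hdpos)
      rw [zero_div] at this
      exact this
    have hφpos : ∀ᶠ w in l, 0 < φ w := by
      filter_upwards [hev] with w ⟨hw1, hw2, hw3⟩
      have h1 : 0 < ‖deriv f w‖ := by simpa [norm_pos_iff] using hw3
      have h2 : ‖f w‖ < 1 := (mem_ball_iff_abs _).mp (hfm hw1)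
      have h3 : 0 < ‖h w‖ := by simpa [norm_pos_iff] using hw2
      have h4 : 0 < (1 - (‖f w‖)^2) * ‖h w‖ := by
        have h5 : 0 < 1 - (‖f w‖)^2 := by nlinarith [norm_nonneg (f w)]
        exact mul_pos h5 h3
      exact div_pos h1 h4
    have hφt' : Tendsto φ l (𝓝[>] 0) := tendsto_nhdsWithin_iff.mpr ⟨hφt, hφpos⟩
    have hlogt : Tendsto (fun w => Real.log (φ w)) l atBot :=
      Real.tendsto_log_nhdsGT_zero.comp hφt'
    have huev : u =ᶠ[l] (fun w => Real.log (φ w)) := by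
      filter_upwards [hev] with w ⟨hw1, hw2, _⟩
      exact hrepf w hw1 hw2
    have hut : Tendsto u l (𝓝 (u z₀)) :=
      (hu.continuousOn.continuousAt hΩn).tendsto.mono_left nhdsWithin_le_nhds
    have hub : Tendsto u l atBot := hlogt.congr' huev.symm
    exact not_tendsto_atBot_of_tendsto_nhds hut hub


lemma alg_cancel (P Q k H S : ℂ) (m : ℕ) (r : ℝ) (hr : 0 < r) (hS : normSq S = 1)
    (main : normSq (P + ((r:ℂ)*S)^m * k) * (1 - normSq Q)^2
          = normSq P * (1 - normSq (Q + ((r:ℂ)*S)^(m+1) * H))^2) :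
    (r^m * normSq k + 2*(P * ((starRingEnd ℂ) S^m * (starRingEnd ℂ) k)).re) * (1 - normSq Q)^2
      = normSq P * r * (r^(m+1) * (r^(m+1)*normSq H
            + 2*(Q * ((starRingEnd ℂ) S^(m+1) * (starRingEnd ℂ) H)).re)^2
          - 2*(1-normSq Q)*(r^(m+1)*normSq H
            + 2*(Q * ((starRingEnd ℂ) S^(m+1) * (starRingEnd ℂ) H)).re)) := by
  have e1 : normSq (P + ((r:ℂ)*S)^m * k)
      = normSq P + r^(2*m) * normSq k
        + 2 * (r^m * (P * ((starRingEnd ℂ) S^m * (starRingEnd ℂ) k)).re) := by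
    rw [Complex.normSq_add]
    congr 1
    · congr 1
      rw [map_mul, map_pow, map_mul, Complex.normSq_ofReal, hS]
      ring
    · congr 1
      rw [map_mul, map_pow, map_mul, Complex.conj_ofReal, mul_pow]
      have : P * (((r:ℂ))^m * (starRingEnd ℂ) S^m * (starRingEnd ℂ) k)
          = ((r^m : ℝ) : ℂ) * (P * ((starRingEnd ℂ) S^m * (starRingEnd ℂ) k)) := by
        push_cast; ring
      rw [this, Complex.re_ofReal_mul]
  have e2 : normSq (Q + ((r:ℂ)*S)^(m+1) * H)
      = normSq Q + r^(2*(m+1)) * normSq H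
        + 2 * (r^(m+1) * (Q * ((starRingEnd ℂ) S^(m+1) * (starRingEnd ℂ) H)).re) := by
    rw [Complex.normSq_add]
    congr 1
    · congr 1
      rw [map_mul, map_pow, map_mul, Complex.normSq_ofReal, hS]
      ring
    · congr 1
      rw [map_mul, map_pow, map_mul, Complex.conj_ofReal, mul_pow]
      have : Q * (((r:ℂ))^(m+1) * (starRingEnd ℂ) S^(m+1) * (starRingEnd ℂ) H)
          = ((r^(m+1) : ℝ) : ℂ) * (Q * ((starRingEnd ℂ) S^(m+1) * (starRingEnd ℂ) H)) := by
        push_cast; ring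
      rw [this, Complex.re_ofReal_mul]
  rw [e1, e2] at main
  have hrm : (r:ℝ)^m ≠ 0 := pow_ne_zero m hr.ne'
  apply mul_left_cancel₀ hrm
  have h2m : r^(2*m) = r^m * r^m := by rw [two_mul, pow_add]
  have h2m1 : r^(2*(m+1)) = r^(m+1) * r^(m+1) := by rw [two_mul, pow_add]
  have hm1 : r^(m+1) = r^m * r := by rw [pow_succ]
  rw [h2m, h2m1, hm1] at main
  rw [hm1]
  generalize r^m = X at main ⊢
  linear_combination main

lemma local_eventually_eq
    (N : Set ℂ) (hN : IsOpen N) (z₀ : ℂ) (hz₀ : z₀ ∈ N)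
    (F G : ℂ → ℂ)
    (hFd : DifferentiableOn ℂ F N) (hGd : DifferentiableOn ℂ G N)
    (hF0 : F z₀ = 0) (hG0 : G z₀ = 0)
    (hderiv : deriv F z₀ = deriv G z₀) (hdne : deriv F z₀ ≠ 0)
    (hmain : ∀ z ∈ N, ‖deriv F z‖ * (1 - normSq (G z))
        = ‖deriv G z‖ * (1 - normSq (F z))) :
    ∀ᶠ z in 𝓝 z₀, F z = G z := by
  have hNn : N ∈ 𝓝 z₀ := hN.mem_nhds hz₀
  have hFa : AnalyticOnNhd ℂ F N := hFd.analyticOnNhd hN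
  have hGa : AnalyticOnNhd ℂ G N := hGd.analyticOnNhd hN
  by_contra hcon
  have hψa : AnalyticAt ℂ (fun z => F z - G z) z₀ := (hFa z₀ hz₀).sub (hGa z₀ hz₀)
  have horder : analyticOrderAt (fun z => F z - G z) z₀ ≠ ⊤ := by
    intro htop
    have hev := analyticOrderAt_eq_top.mp htop
    exact hcon (by filter_upwards [hev] with z hz; exact sub_eq_zero.mp hz)
  obtain ⟨n, hn⟩ : ∃ n : ℕ, analyticOrderAt (fun z => F z - G z) z₀ = n := by
    obtain ⟨n, hn⟩ := WithTop.ne_top_iff_exists.mp horder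
    exact ⟨n, hn.symm⟩
  obtain ⟨H, hHa, hc0, hfac⟩ := hψa.analyticOrderAt_eq_natCast.mp hn
  simp only [smul_eq_mul] at hfac
  have hn1 : 1 ≤ n := by
    rcases Nat.eq_zero_or_pos n with h0 | h1
    · exfalso
      have hself := hfac.self_of_nhds
      rw [hF0, hG0, h0, pow_zero, one_mul, sub_self] at hself
      exact hc0 hself.symm
    · exact h1
  obtain ⟨s, hsmem, hsH⟩ := hHa.exists_mem_nhds_analyticOnNhd
  have hHd : AnalyticAt ℂ (deriv H) z₀ := hsH.deriv z₀ (mem_of_mem_nhds hsmem)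
  set K : ℂ → ℂ := fun z => (n:ℂ) * H z + (z - z₀) * deriv H z with hK
  have hKcont : ContinuousAt K z₀ := by
    apply ContinuousAt.add
    · exact continuousAt_const.mul hHa.continuousAt
    · exact ((continuous_id.sub continuous_const).continuousAt).mul hHd.continuousAt
  have hKz₀ : K z₀ = (n:ℂ) * H z₀ := by simp [hK]
  have hfac' : ∀ᶠ z in 𝓝 z₀, deriv F z - deriv G z = (z - z₀)^(n-1) * K z := by
    have hev1 := hfac.eventually_nhds
    have hev2 : ∀ᶠ z in 𝓝 z₀, AnalyticAt ℂ H z := hHa.eventually_analyticAt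
    filter_upwards [hev1, hev2, hNn] with z h1 h2 h3
    have hFz : HasDerivAt F (deriv F z) z :=
      (hFd.differentiableAt (hN.mem_nhds h3)).hasDerivAt
    have hGz : HasDerivAt G (deriv G z) z :=
      (hGd.differentiableAt (hN.mem_nhds h3)).hasDerivAt
    have hsub : HasDerivAt (fun w => F w - G w) (deriv F z - deriv G z) z := hFz.sub hGz
    have hHz : HasDerivAt H (deriv H z) z := h2.differentiableAt.hasDerivAt
    have hpow : HasDerivAt (fun w : ℂ => (w - z₀)^n) ((n:ℂ) * (z - z₀)^(n-1)) z := by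
      have := ((hasDerivAt_id z).sub_const z₀).pow n
      simp at this
      exact this
    have hrhs : HasDerivAt (fun w => (w - z₀)^n * H w)
        ((n:ℂ)*(z-z₀)^(n-1) * H z + (z-z₀)^n * deriv H z) z := hpow.mul hHz
    have heq1 : (fun w => F w - G w) =ᶠ[𝓝 z] (fun w => (w - z₀)^n * H w) := h1
    calc deriv F z - deriv G z = deriv (fun w => F w - G w) z := hsub.deriv.symm
      _ = deriv (fun w => (w - z₀)^n * H w) z := heq1.deriv_eq
      _ = (n:ℂ)*(z-z₀)^(n-1) * H z + (z-z₀)^n * deriv H z := hrhs.deriv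
      _ = (z - z₀)^(n-1) * K z := by
          have hpsucc : (z-z₀)^n = (z-z₀)^(n-1) * (z-z₀) := by
            rw [← pow_succ]
            congr 1
            omega
          rw [hK, hpsucc]
          ring
  have hn2 : 2 ≤ n := by
    by_contra hlt
    have hn1' : n = 1 := by omega
    have hself := hfac'.self_of_nhds
    rw [hderiv, sub_self, hn1'] at hself
    simp only [sub_self, pow_zero, one_mul] at hself
    rw [hKz₀, hn1'] at hself
    simp at hself
    exact hc0 hself.symm
  set m := n - 1 with hm
  have hmn : n = m + 1 := by omega
  have hm1 : 1 ≤ m := by omega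
  set d := deriv F z₀ with hd
  set c := H z₀ with hc
  have hevall : ∀ᶠ z in 𝓝 z₀, z ∈ N ∧ (F z = G z + (z - z₀)^(m+1) * H z)
      ∧ (deriv F z = deriv G z + (z - z₀)^m * K z) := by
    filter_upwards [hfac, hfac', hNn] with z h1 h2 h3
    refine ⟨h3, by rw [← hmn]; linear_combination h1, ?_⟩
    linear_combination h2
  have key : ∀ θ : ℝ, (d * ((starRingEnd ℂ) (Complex.exp (θ*I))^m
      * (starRingEnd ℂ) ((n:ℂ) * c))).re = 0 := by
    intro θ
    set S := Complex.exp (θ * I) with hSdef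
    have hS : normSq S = 1 := by
      rw [← Complex.sq_norm, hSdef, Complex.norm_exp_ofReal_mul_I]
      norm_num
    set ρ : ℝ → ℂ := fun r => z₀ + (r:ℂ) * S with hρ
    have hρc : Continuous ρ := by
      apply continuous_const.add
      exact (Complex.continuous_ofReal.mul continuous_const)
    have hρt : Tendsto ρ (𝓝[>] (0:ℝ)) (𝓝 z₀) := by
      have h0 : ρ 0 = z₀ := by simp [hρ]
      have := (hρc.tendsto 0).mono_left (nhdsWithin_le_nhds (s := Set.Ioi (0:ℝ)))
      rwa [h0] at this
    have hevr := hρt.eventually hevall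
    set Cf : ℝ → ℝ := fun r => r^(m+1)*normSq (H (ρ r))
      + 2*((G (ρ r)) * ((starRingEnd ℂ) S^(m+1) * (starRingEnd ℂ) (H (ρ r)))).re with hCf
    set Φ₁ : ℝ → ℝ := fun r => (r^m * normSq (K (ρ r))
      + 2*((deriv G (ρ r)) * ((starRingEnd ℂ) S^m * (starRingEnd ℂ) (K (ρ r)))).re)
      * (1 - normSq (G (ρ r)))^2 with hΦ₁
    set Φ₂ : ℝ → ℝ := fun r => normSq (deriv G (ρ r)) * r
      * (r^(m+1) * (Cf r)^2 - 2*(1-normSq (G (ρ r)))*(Cf r)) with hΦ₂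
    have heq : ∀ᶠ r in 𝓝[>] (0:ℝ), Φ₁ r = Φ₂ r := by
      filter_upwards [hevr, self_mem_nhdsWithin] with r hr hrpos
      rw [Set.mem_Ioi] at hrpos
      obtain ⟨hrN, hrF, hrF'⟩ := hr
      have hid := hmain (ρ r) hrN
      have hsq : normSq (deriv F (ρ r)) * (1 - normSq (G (ρ r)))^2
          = normSq (deriv G (ρ r)) * (1 - normSq (F (ρ r)))^2 := by
        have h2 := congrArg (fun x : ℝ => x^2) hid
        simp only [mul_pow, Complex.sq_norm] at h2
        exact h2
      rw [hrF, hrF'] at hsq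
      have hts : ρ r - z₀ = (r:ℂ) * S := by rw [hρ]; ring
      rw [hts] at hsq
      exact alg_cancel (deriv G (ρ r)) (G (ρ r)) (K (ρ r)) (H (ρ r)) S m r hrpos hS hsq
    -- limits
    have hcontG' : ContinuousAt (deriv G) z₀ := (hGa.deriv z₀ hz₀).continuousAt
    have hcontG : ContinuousAt G z₀ := (hGa z₀ hz₀).continuousAt
    have hcontH : ContinuousAt H z₀ := hHa.continuousAt
    have tr : Tendsto (fun r : ℝ => r) (𝓝[>] (0:ℝ)) (𝓝 0) :=
      tendsto_id.mono_left nhdsWithin_le_nhds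
    have tK : Tendsto (fun r => K (ρ r)) (𝓝[>] (0:ℝ)) (𝓝 ((n:ℂ) * c)) := by
      have := hKcont.tendsto.comp hρt
      rwa [hKz₀] at this
    have tG' : Tendsto (fun r => deriv G (ρ r)) (𝓝[>] (0:ℝ)) (𝓝 d) := by
      have := hcontG'.tendsto.comp hρt
      rwa [← hderiv] at this
    have tG : Tendsto (fun r => G (ρ r)) (𝓝[>] (0:ℝ)) (𝓝 0) := by
      have := hcontG.tendsto.comp hρt
      rwa [hG0] at this
    have tH : Tendsto (fun r => H (ρ r)) (𝓝[>] (0:ℝ)) (𝓝 c) :=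
      hcontH.tendsto.comp hρt
    have cnormSq : Continuous normSq := Complex.continuous_normSq
    have cre : Continuous Complex.re := Complex.continuous_re
    have cconj : Continuous (starRingEnd ℂ) := Complex.continuous_conj
    have hT1 : Tendsto Φ₁ (𝓝[>] (0:ℝ))
        (𝓝 ((0^m * normSq ((n:ℂ)*c)
          + 2*((d * ((starRingEnd ℂ) S^m * (starRingEnd ℂ) ((n:ℂ)*c)))).re)
          * (1 - normSq (0:ℂ))^2)) := by
      apply Tendsto.mul
      · apply Tendsto.add
        · exact (tr.pow m).mul (cnormSq.continuousAt.tendsto.comp tK)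
        · apply Tendsto.const_mul
          apply cre.continuousAt.tendsto.comp
          exact tG'.mul (Tendsto.const_mul _ (cconj.continuousAt.tendsto.comp tK))
      · exact ((tendsto_const_nhds.sub (cnormSq.continuousAt.tendsto.comp tG)).pow 2)
    have hCft : Tendsto Cf (𝓝[>] (0:ℝ)) (𝓝 (0^(m+1) * normSq c
        + 2*(((0:ℂ) * ((starRingEnd ℂ) S^(m+1) * (starRingEnd ℂ) c))).re)) := by
      apply Tendsto.add
      · exact (tr.pow (m+1)).mul (cnormSq.continuousAt.tendsto.comp tH)
      · apply Tendsto.const_mul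
        apply cre.continuousAt.tendsto.comp
        exact tG.mul (Tendsto.const_mul _ (cconj.continuousAt.tendsto.comp tH))
    have hCf0 : (0:ℝ)^(m+1) * normSq c
        + 2*(((0:ℂ) * ((starRingEnd ℂ) S^(m+1) * (starRingEnd ℂ) c))).re = 0 := by
      simp
    rw [hCf0] at hCft
    have hT2 : Tendsto Φ₂ (𝓝[>] (0:ℝ)) (𝓝 (normSq d * 0
        * (0^(m+1) * 0^2 - 2*(1 - normSq (0:ℂ))*0))) := by
      apply Tendsto.mul
      · exact ((cnormSq.continuousAt.tendsto.comp tG').mul tr)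
      · apply Tendsto.sub
        · exact (tr.pow (m+1)).mul (hCft.pow 2)
        · exact ((tendsto_const_nhds.sub
            (cnormSq.continuousAt.tendsto.comp tG)).const_mul 2).mul hCft
    have hT2' : Tendsto Φ₂ (𝓝[>] (0:ℝ)) (𝓝 0) := by
      convert hT2 using 2
      ring
    have hL := tendsto_nhds_unique (hT1.congr' heq) hT2'
    have hzm : (0:ℝ)^m = 0 := zero_pow (by omega)
    rw [hzm] at hL
    simp only [Complex.normSq_zero, zero_mul, zero_add, sub_zero, one_pow, mul_one] at hL
    linarith
  -- extract contradiction from key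
  set w := d * (starRingEnd ℂ) ((n:ℂ) * c) with hw
  have hwne : w ≠ 0 := by
    rw [hw]
    apply mul_ne_zero hdne
    rw [map_ne_zero]
    exact mul_ne_zero (Nat.cast_ne_zero.mpr (by omega)) hc0
  have hkey2 : ∀ θ : ℝ, (w * (starRingEnd ℂ) (Complex.exp (θ*I))^m).re = 0 := by
    intro θ
    have := key θ
    rw [hw]
    convert this using 2
    ring
  set θ₀ : ℝ := Complex.arg w / m with hθ₀
  have hfin : (w * (starRingEnd ℂ) (Complex.exp ((θ₀:ℂ)*I))^m).re = ‖w‖ := by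
    have hconj : (starRingEnd ℂ) (Complex.exp ((θ₀:ℂ)*I)) = Complex.exp (-(θ₀:ℂ)*I) := by
      rw [← Complex.exp_conj, map_mul, Complex.conj_ofReal, Complex.conj_I]
      congr 1
      ring
    rw [hconj, ← Complex.exp_nat_mul]
    have harg : (m:ℂ) * (-(θ₀:ℂ)*I) = -(Complex.arg w) * I := by
      rw [hθ₀]
      have hm0 : (m:ℂ) ≠ 0 := Nat.cast_ne_zero.mpr (by omega)
      push_cast
      field_simp
    rw [harg]
    nth_rewrite 1 [← Complex.norm_mul_exp_arg_mul_I w]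
    rw [mul_assoc, ← Complex.exp_add]
    have hz : (Complex.arg w : ℂ) * I + -(Complex.arg w) * I = 0 := by ring
    rw [hz, Complex.exp_zero, mul_one]
    simp
  rw [hkey2 θ₀] at hfin
  exact hwne (by simpa using hfin.symm)


/-- Uniqueness in the generalized Liouville representation: two holomorphic maps
`f, g : Ω → 𝔻` representing the same solution `u` of `Δu = 4|h|²e^{2u}` on a simply
connected domain differ by postcomposition with a conformal automorphism of `𝔻`. -/
theorem liouville_representation_unique
    (Ω : Set ℂ) (hΩ : IsOpen Ω) (hconn : IsConnected Ω)
    (hsc : SimplyConnectedSpace Ω)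
    (h : ℂ → ℂ) (hh : DifferentiableOn ℂ h Ω) (hne : ∃ z ∈ Ω, h z ≠ 0)
    (u : ℂ → ℝ) (hu : ContDiffOn ℝ 2 u Ω)
    (hpde : ∀ z ∈ Ω, lap u z = 4 * (‖h z‖)^2 * Real.exp (2 * u z))
    (f g : ℂ → ℂ)
    (hf : DifferentiableOn ℂ f Ω) (hfm : Set.MapsTo f Ω (Metric.ball (0:ℂ) 1))
    (hg : DifferentiableOn ℂ g Ω) (hgm : Set.MapsTo g Ω (Metric.ball (0:ℂ) 1))
    (hrepf : ∀ z ∈ Ω, h z ≠ 0 →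
      u z = Real.log (‖deriv f z‖ /
        ((1 - (‖f z‖)^2) * ‖h z‖)))
    (hrepg : ∀ z ∈ Ω, h z ≠ 0 →
      u z = Real.log (‖deriv g z‖ /
        ((1 - (‖g z‖)^2) * ‖h z‖))) :
    ∃ T : ℂ → ℂ, IsDiskAutomorphism T ∧ ∀ z ∈ Ω, g z = T (f z) := by
  obtain ⟨z₀, hz₀, hh0⟩ := hne
  have hballf : ∀ z ∈ Ω, ‖f z‖ < 1 := fun z hz => (mem_ball_iff_abs _).mp (hfm hz)
  have hballg : ∀ z ∈ Ω, ‖g z‖ < 1 := fun z hz => (mem_ball_iff_abs _).mp (hgm hz)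
  set a := f z₀ with hadef
  set b := g z₀ with hbdef
  have ha : ‖a‖ < 1 := hballf z₀ hz₀
  have hb : ‖b‖ < 1 := hballg z₀ hz₀
  set N := Ω ∩ h ⁻¹' ({(0:ℂ)}ᶜ) with hNdef
  have hNopen : IsOpen N := hh.continuousOn.isOpen_inter_preimage hΩ isOpen_compl_singleton
  have hz₀N : z₀ ∈ N := ⟨hz₀, hh0⟩
  have hNsub : N ⊆ Ω := Set.inter_subset_left
  have hNmem : ∀ z ∈ N, z ∈ Ω ∧ h z ≠ 0 := fun z hz => ⟨hz.1, hz.2⟩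
  have hfd' : ∀ z ∈ N, deriv f z ≠ 0 := fun z hz =>
    deriv_ne_zero_of_rep Ω hΩ h hh u hu hpde f hf hfm hrepf z hz.1 hz.2
  have hgd' : ∀ z ∈ N, deriv g z ≠ 0 := fun z hz =>
    deriv_ne_zero_of_rep Ω hΩ h hh u hu hpde g hg hgm hrepg z hz.1 hz.2
  -- equality of densities on N
  have hlam : ∀ z ∈ N, ‖deriv f z‖ * (1 - normSq (g z))
      = ‖deriv g z‖ * (1 - normSq (f z)) := by
    intro z hz
    obtain ⟨hzΩ, hzh⟩ := hNmem z hz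
    have h1 := hrepf z hzΩ hzh
    have h2 := hrepg z hzΩ hzh
    have hfz1 : ‖f z‖ < 1 := hballf z hzΩ
    have hgz1 : ‖g z‖ < 1 := hballg z hzΩ
    have hPf : 0 < 1 - (‖f z‖)^2 := by nlinarith [norm_nonneg (f z)]
    have hPg : 0 < 1 - (‖g z‖)^2 := by nlinarith [norm_nonneg (g z)]
    have hC : 0 < ‖h z‖ := by simpa [norm_pos_iff] using hzh
    have hpf : 0 < ‖deriv f z‖ := by
      simpa [norm_pos_iff] using hfd' z hz
    have hpg : 0 < ‖deriv g z‖ := by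
      simpa [norm_pos_iff] using hgd' z hz
    have hXpos : 0 < ‖deriv f z‖ / ((1 - (‖f z‖)^2) * ‖h z‖) :=
      div_pos hpf (mul_pos hPf hC)
    have hYpos : 0 < ‖deriv g z‖ / ((1 - (‖g z‖)^2) * ‖h z‖) :=
      div_pos hpg (mul_pos hPg hC)
    have hlog : Real.log (‖deriv f z‖ / ((1 - (‖f z‖)^2) * ‖h z‖))
        = Real.log (‖deriv g z‖ / ((1 - (‖g z‖)^2) * ‖h z‖)) :=
      h1.symm.trans h2
    have hXY := Real.log_injOn_pos (Set.mem_Ioi.mpr hXpos) (Set.mem_Ioi.mpr hYpos) hlog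
    rw [div_eq_div_iff (mul_pos hPf hC).ne' (mul_pos hPg hC).ne'] at hXY
    have h3 : (‖deriv f z‖ * (1 - (‖g z‖)^2)) * ‖h z‖
        = (‖deriv g z‖ * (1 - (‖f z‖)^2)) * ‖h z‖ := by
      linear_combination hXY
    have h4 := mul_right_cancel₀ hC.ne' h3
    rw [← Complex.sq_norm (g z), ← Complex.sq_norm (f z)]
    exact h4
  -- composed maps
  set F : ℂ → ℂ := fun z => blas a (f z) with hFdef
  set G₀ : ℂ → ℂ := fun z => blas b (g z) with hG₀def
  have hFder : ∀ z ∈ Ω, HasDerivAt F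
      (((1 - a * (starRingEnd ℂ) a) / (1 - (starRingEnd ℂ) a * f z)^2) * deriv f z) z := by
    intro z hz
    have h1 := blas_hasDerivAt a (f z) (denom_ne a (f z) ha (hballf z hz))
    have h2 := (hf.differentiableAt (hΩ.mem_nhds hz)).hasDerivAt
    exact h1.comp z h2
  have hG₀der : ∀ z ∈ Ω, HasDerivAt G₀
      (((1 - b * (starRingEnd ℂ) b) / (1 - (starRingEnd ℂ) b * g z)^2) * deriv g z) z := by
    intro z hz
    have h1 := blas_hasDerivAt b (g z) (denom_ne b (g z) hb (hballg z hz))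
    have h2 := (hg.differentiableAt (hΩ.mem_nhds hz)).hasDerivAt
    exact h1.comp z h2
  -- density transfer
  have hFden : ∀ z ∈ Ω, ‖deriv F z‖ * (1 - normSq (f z))
      = (1 - normSq (F z)) * ‖deriv f z‖ := by
    intro z hz
    rw [(hFder z hz).deriv, norm_mul]
    have := blas_density a (f z) ha (hballf z hz)
    rw [hFdef]
    calc ‖(1 - a * (starRingEnd ℂ) a) / (1 - (starRingEnd ℂ) a * f z)^2‖
          * ‖deriv f z‖ * (1 - normSq (f z))
        = (‖(1 - a * (starRingEnd ℂ) a) / (1 - (starRingEnd ℂ) a * f z)^2‖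
          * (1 - normSq (f z))) * ‖deriv f z‖ := by ring
      _ = (1 - normSq (blas a (f z))) * ‖deriv f z‖ := by rw [this]
  have hG₀den : ∀ z ∈ Ω, ‖deriv G₀ z‖ * (1 - normSq (g z))
      = (1 - normSq (G₀ z)) * ‖deriv g z‖ := by
    intro z hz
    rw [(hG₀der z hz).deriv, norm_mul]
    have := blas_density b (g z) hb (hballg z hz)
    rw [hG₀def]
    calc ‖(1 - b * (starRingEnd ℂ) b) / (1 - (starRingEnd ℂ) b * g z)^2‖
          * ‖deriv g z‖ * (1 - normSq (g z))
        = (‖(1 - b * (starRingEnd ℂ) b) / (1 - (starRingEnd ℂ) b * g z)^2‖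
          * (1 - normSq (g z))) * ‖deriv g z‖ := by ring
      _ = (1 - normSq (blas b (g z))) * ‖deriv g z‖ := by rw [this]
  have hFz₀ : F z₀ = 0 := by rw [hFdef]; simp [blas, hadef]
  have hG₀z₀ : G₀ z₀ = 0 := by rw [hG₀def]; simp [blas, hbdef]
  -- |deriv F z₀| = |deriv G₀ z₀| ≠ 0
  have hnsa : normSq a < 1 := (normSq_lt_one_iff a).mpr ha
  have hnsb : normSq b < 1 := (normSq_lt_one_iff b).mpr hb
  have haF : ‖deriv F z₀‖ * (1 - normSq a) = ‖deriv f z₀‖ := by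
    have := hFden z₀ hz₀
    rw [hFz₀] at this
    simpa using this
  have haG : ‖deriv G₀ z₀‖ * (1 - normSq b) = ‖deriv g z₀‖ := by
    have := hG₀den z₀ hz₀
    rw [hG₀z₀] at this
    simpa using this
  have hlam₀ := hlam z₀ hz₀N
  have habseq : ‖deriv F z₀‖ = ‖deriv G₀ z₀‖ := by
    have h1 : 0 < 1 - normSq a := by linarith
    have h2 : 0 < 1 - normSq b := by linarith
    have : ‖deriv F z₀‖ * ((1 - normSq a) * (1 - normSq b))
        = ‖deriv G₀ z₀‖ * ((1 - normSq a) * (1 - normSq b)) := by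
      calc ‖deriv F z₀‖ * ((1 - normSq a) * (1 - normSq b))
          = (‖deriv F z₀‖ * (1 - normSq a)) * (1 - normSq b) := by ring
        _ = ‖deriv f z₀‖ * (1 - normSq b) := by rw [haF]
        _ = ‖deriv g z₀‖ * (1 - normSq a) := hlam₀
        _ = (‖deriv G₀ z₀‖ * (1 - normSq b)) * (1 - normSq a) := by rw [haG]
        _ = ‖deriv G₀ z₀‖ * ((1 - normSq a) * (1 - normSq b)) := by ring
    exact mul_right_cancel₀ (by positivity) this
  have hdF0 : deriv F z₀ ≠ 0 := by
    intro h0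
    have := haF
    rw [h0] at this
    simp at this
    have hpf : 0 < ‖deriv f z₀‖ := by
      simpa [norm_pos_iff] using hfd' z₀ hz₀N
    linarith [this.symm ▸ hpf]
  have hdG0 : deriv G₀ z₀ ≠ 0 := by
    intro h0
    rw [h0] at habseq
    simp at habseq
    exact hdF0 habseq
  set e : ℂ := deriv F z₀ / deriv G₀ z₀ with hedef
  have habse : ‖e‖ = 1 := by
    rw [hedef, norm_div, habseq, div_self (by simpa [norm_eq_zero] using hdG0 : ‖deriv G₀ z₀‖ ≠ 0)]
  have hnse : normSq e = 1 := by
    rw [← Complex.sq_norm, habse]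
    norm_num
  set G : ℂ → ℂ := fun z => e * G₀ z with hGdef
  have hGz₀ : G z₀ = 0 := by rw [hGdef]; simp [hG₀z₀]
  have hGder : ∀ z ∈ Ω, HasDerivAt G
      (e * ((1 - b * (starRingEnd ℂ) b) / (1 - (starRingEnd ℂ) b * g z)^2 * deriv g z)) z :=
    fun z hz => (hG₀der z hz).const_mul e
  have hGderiv : ∀ z ∈ Ω, deriv G z = e * deriv G₀ z := by
    intro z hz
    rw [(hGder z hz).deriv, (hG₀der z hz).deriv]
  have hderivG : deriv F z₀ = deriv G z₀ := by
    rw [hGderiv z₀ hz₀, hedef]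
    field_simp
  have hmainFG : ∀ z ∈ N, ‖deriv F z‖ * (1 - normSq (G z))
      = ‖deriv G z‖ * (1 - normSq (F z)) := by
    intro z hz
    have hzΩ := hNsub hz
    have e1 := hFden z hzΩ
    have e2 := hG₀den z hzΩ
    have e3 := hlam z hz
    have hGG : normSq (G z) = normSq (G₀ z) := by
      rw [hGdef]
      simp only [map_mul, hnse, one_mul]
    have hGd : ‖deriv G z‖ = ‖deriv G₀ z‖ := by
      rw [hGderiv z hzΩ, norm_mul, habse, one_mul]
    rw [hGG, hGd]
    have hPf : 0 < 1 - normSq (f z) := by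
      have := (normSq_lt_one_iff (f z)).mpr (hballf z hzΩ)
      linarith
    have hPg : 0 < 1 - normSq (g z) := by
      have := (normSq_lt_one_iff (g z)).mpr (hballg z hzΩ)
      linarith
    have hcan : (‖deriv F z‖ * (1 - normSq (G₀ z)))
          * ((1 - normSq (f z)) * (1 - normSq (g z)))
        = (‖deriv G₀ z‖ * (1 - normSq (F z)))
          * ((1 - normSq (f z)) * (1 - normSq (g z))) := by
      linear_combination ((1 - normSq (G₀ z)) * (1 - normSq (g z))) * e1
        - ((1 - normSq (F z)) * (1 - normSq (f z))) * e2
        + ((1 - normSq (F z)) * (1 - normSq (G₀ z))) * e3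
    exact mul_right_cancel₀ (mul_pos hPf hPg).ne' hcan
  have hFdΩ : DifferentiableOn ℂ F Ω :=
    fun z hz => ((hFder z hz).differentiableAt).differentiableWithinAt
  have hGdΩ : DifferentiableOn ℂ G Ω :=
    fun z hz => ((hGder z hz).differentiableAt).differentiableWithinAt
  have hev := local_eventually_eq N hNopen z₀ hz₀N F G (hFdΩ.mono hNsub) (hGdΩ.mono hNsub)
    hFz₀ hGz₀ hderivG hdF0 hmainFG
  have hEq : Set.EqOn F G Ω :=
    (hFdΩ.analyticOnNhd hΩ).eqOn_of_preconnected_of_eventuallyEq (hGdΩ.analyticOnNhd hΩ)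
      hconn.isPreconnected hz₀ hev
  refine ⟨fun w => blas (-b) ((starRingEnd ℂ) e * blas a w),
    isDiskAuto a (-b) ((starRingEnd ℂ) e) ha (by simpa using hb) (by simpa using habse), ?_⟩
  intro z hz
  have h1 : blas a (f z) = e * blas b (g z) := hEq hz
  have h2 : (starRingEnd ℂ) e * blas a (f z) = blas b (g z) := by
    rw [h1, ← mul_assoc, mul_comm ((starRingEnd ℂ) e) e, Complex.mul_conj, hnse]
    simp
  show g z = blas (-b) ((starRingEnd ℂ) e * blas a (f z))
  rw [h2]
  exact (blas_inv b (g z) hb (hballg z hz)).symm
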